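/- There exists r₀ > 0 (depending on ν, δ, α₁, α₂) such that for every nonempty connected open set U contained in the annulus {x ∈ ℝ² : δ < |x| < δ + r₀}, there is no continuously differentiable function p : U → ℝ satisfying the stationary Navier–Stokes equation −ν Δu + (u·∇)u = −∇p at every point of U, where Δu denotes the componentwise Laplacian of u and ((u·∇)u)(x) denotes the derivative of u at x applied to the vector u(x). In other words, the parallel laminar flow with Poiseuille-type profile h cannot be a stationary Navier–Stokes flow near a boundary portion of constant nonzero curvature 1/δ. -/

import Mathlib

noncomputable section

/-- Poiseuille-type speed profile `h(r) = α₁ r − (α₂/2) r²`. -/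
def prof (α₁ α₂ r : ℝ) : ℝ := α₁ * r - α₂ / 2 * r ^ 2

/-- Euclidean norm on `ℝ × ℝ`. -/
def nrm (x : ℝ × ℝ) : ℝ := Real.sqrt (x.1 ^ 2 + x.2 ^ 2)

/-- Parallel laminar flow `u(x) = h(|x| − δ) (x₂, −x₁)/|x|` around the origin. -/
def vel (δ α₁ α₂ : ℝ) (x : ℝ × ℝ) : ℝ × ℝ :=
  (prof α₁ α₂ (nrm x - δ) / nrm x) • (x.2, -x.1)

/-- Componentwise Laplacian of a planar vector field. -/
def lap (f : ℝ × ℝ → ℝ × ℝ) (x : ℝ × ℝ) : ℝ × ℝ :=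
  fderiv ℝ (fun y => fderiv ℝ f y (1, 0)) x (1, 0) +
  fderiv ℝ (fun y => fderiv ℝ f y (0, 1)) x (0, 1)

/-- Gradient of a scalar function on `ℝ × ℝ`. -/
def grad (p : ℝ × ℝ → ℝ) (x : ℝ × ℝ) : ℝ × ℝ :=
  (fderiv ℝ p x (1, 0), fderiv ℝ p x (0, 1))

namespace NSAux

def fstL : ℝ × ℝ →L[ℝ] ℝ := ContinuousLinearMap.fst ℝ ℝ ℝ
def sndL : ℝ × ℝ →L[ℝ] ℝ := ContinuousLinearMap.snd ℝ ℝ ℝ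

def dC (g₁ g₂ : ℝ) : ℝ × ℝ →L[ℝ] ℝ := g₁ • fstL + g₂ • sndL

@[simp] lemma dC_apply (g₁ g₂ : ℝ) (v : ℝ × ℝ) : dC g₁ g₂ v = g₁ * v.1 + g₂ * v.2 := by
  simp [dC, fstL, sndL, smul_eq_mul]

lemma dC_congr {a b c d : ℝ} (h1 : a = c) (h2 : b = d) : dC a b = dC c d := by rw [h1, h2]

lemma fd_congr {f : ℝ × ℝ → ℝ} {L L' : ℝ × ℝ →L[ℝ] ℝ} {x : ℝ × ℝ}
    (h : HasFDerivAt f L x) (he : ∀ v, L' v = L v) : HasFDerivAt f L' x := by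
  have hE : L' = L := ContinuousLinearMap.ext he
  rw [hE]; exact h

lemma clm_eq_dC (L : ℝ × ℝ →L[ℝ] ℝ) : L = dC (L (1, 0)) (L (0, 1)) := by
  refine ContinuousLinearMap.ext fun v => ?_
  have hv : v = v.1 • ((1 : ℝ), (0 : ℝ)) + v.2 • ((0 : ℝ), (1 : ℝ)) := by
    apply Prod.ext <;> simp
  rw [hv, map_add, map_smul, map_smul, smul_eq_mul, smul_eq_mul, dC_apply]
  simp
  ring

lemma nrm_def (x : ℝ × ℝ) : nrm x = Real.sqrt (x.1 ^ 2 + x.2 ^ 2) := rfl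

lemma sq_add_sq_pos {x : ℝ × ℝ} (hx : 0 < nrm x) : 0 < x.1 ^ 2 + x.2 ^ 2 :=
  Real.sqrt_pos.mp (by rwa [nrm_def] at hx)

lemma nrm_sq {x : ℝ × ℝ} (hx : 0 < nrm x) : x.1 ^ 2 + x.2 ^ 2 = nrm x ^ 2 := by
  rw [nrm_def]; exact (Real.sq_sqrt (sq_add_sq_pos hx).le).symm

def mon (a b : ℕ) (k : ℤ) (x : ℝ × ℝ) : ℝ := x.1 ^ a * x.2 ^ b * nrm x ^ k

lemma hasDerivAt_sqrt_zpow (k : ℤ) {s : ℝ} (hs : 0 < s) :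
    HasDerivAt (fun u => Real.sqrt u ^ k) ((k / 2) * Real.sqrt s ^ (k - 2)) s := by
  have hts : 0 < Real.sqrt s := Real.sqrt_pos.mpr hs
  have ht : Real.sqrt s ≠ 0 := hts.ne'
  have h1 := Real.hasDerivAt_sqrt hs.ne'
  have h2 := hasDerivAt_zpow k (Real.sqrt s) (Or.inl ht)
  have h3 : HasDerivAt (fun u => Real.sqrt u ^ k)
      ((k : ℝ) * Real.sqrt s ^ (k - 1) * (1 / (2 * Real.sqrt s))) s := by
    simpa [Function.comp_def] using h2.comp s h1
  convert h3 using 1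
  rw [show k - 2 = k - 1 - 1 by ring, zpow_sub_one₀ ht]
  field_simp

lemma hasFDerivAt_mon (a b : ℕ) (k : ℤ) {x : ℝ × ℝ} (hx : 0 < nrm x) :
    HasFDerivAt (mon a b k)
      (dC ((a : ℝ) * mon (a - 1) b k x + (k : ℝ) * mon (a + 1) b (k - 2) x)
          ((b : ℝ) * mon a (b - 1) k x + (k : ℝ) * mon a (b + 1) (k - 2) x)) x := by
  have hs : 0 < x.1 ^ 2 + x.2 ^ 2 := sq_add_sq_pos hx
  have h1 : HasFDerivAt (fun y : ℝ × ℝ => y.1) fstL x := hasFDerivAt_fst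
  have h2 : HasFDerivAt (fun y : ℝ × ℝ => y.2) sndL x := hasFDerivAt_snd
  have hsq : HasFDerivAt (fun y : ℝ × ℝ => y.1 ^ 2 + y.2 ^ 2)
      (dC (2 * x.1) (2 * x.2)) x := by
    have h1' : HasFDerivAt (fun y : ℝ × ℝ => y.1 ^ 2)
        ((2 * x.1 ^ 1 : ℝ) • fstL) x := by
      simpa [Function.comp_def] using (hasDerivAt_pow 2 x.1).comp_hasFDerivAt x h1
    have h2' : HasFDerivAt (fun y : ℝ × ℝ => y.2 ^ 2)
        ((2 * x.2 ^ 1 : ℝ) • sndL) x := by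
      simpa [Function.comp_def] using (hasDerivAt_pow 2 x.2).comp_hasFDerivAt x h2
    refine fd_congr (h1'.add h2') fun v => ?_
    simp [dC, fstL, sndL, smul_eq_mul]
    try ring
  have hpow : HasFDerivAt (fun y : ℝ × ℝ => nrm y ^ k)
      (((k : ℝ) / 2 * nrm x ^ (k - 2)) • dC (2 * x.1) (2 * x.2)) x := by
    simpa [Function.comp_def, nrm_def] using
      (hasDerivAt_sqrt_zpow k hs).comp_hasFDerivAt x hsq
  have hxa : HasFDerivAt (fun y : ℝ × ℝ => y.1 ^ a)
      (((a : ℝ) * x.1 ^ (a - 1)) • fstL) x := by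
    simpa [Function.comp_def] using (hasDerivAt_pow a x.1).comp_hasFDerivAt x h1
  have hxb : HasFDerivAt (fun y : ℝ × ℝ => y.2 ^ b)
      (((b : ℝ) * x.2 ^ (b - 1)) • sndL) x := by
    simpa [Function.comp_def] using (hasDerivAt_pow b x.2).comp_hasFDerivAt x h2
  have hmain : HasFDerivAt (mon a b k) _ x := (hxa.mul hxb).mul hpow
  refine fd_congr hmain fun v => ?_
  simp [dC, fstL, sndL, mon, smul_eq_mul]
  ring


/-! ### Explicit components of the velocity field and its derivatives -/

def vel1 (A B C : ℝ) (x : ℝ × ℝ) : ℝ :=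
  A * mon 0 1 0 x - B * mon 0 1 1 x - C * mon 0 1 (-1) x

def vel2 (A B C : ℝ) (x : ℝ × ℝ) : ℝ :=
  -(A * mon 1 0 0 x) + B * mon 1 0 1 x + C * mon 1 0 (-1) x

def d11 (B C : ℝ) (x : ℝ × ℝ) : ℝ := -(B * mon 1 1 (-1) x) + C * mon 1 1 (-3) x

def d21 (A B C : ℝ) (x : ℝ × ℝ) : ℝ :=
  A * mon 0 0 0 x - B * mon 0 0 1 x - B * mon 0 2 (-1) x - C * mon 0 0 (-1) x +
    C * mon 0 2 (-3) x

def d12 (A B C : ℝ) (x : ℝ × ℝ) : ℝ :=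
  -(A * mon 0 0 0 x) + B * mon 0 0 1 x + B * mon 2 0 (-1) x + C * mon 0 0 (-1) x -
    C * mon 2 0 (-3) x

def d22 (B C : ℝ) (x : ℝ × ℝ) : ℝ := B * mon 1 1 (-1) x - C * mon 1 1 (-3) x

def pd11x (B C : ℝ) (x : ℝ × ℝ) : ℝ :=
  -(B * mon 0 1 (-1) x) + B * mon 2 1 (-3) x + C * mon 0 1 (-3) x - 3 * C * mon 2 1 (-5) x

def pd11y (B C : ℝ) (x : ℝ × ℝ) : ℝ :=
  -(B * mon 1 0 (-1) x) + B * mon 1 2 (-3) x + C * mon 1 0 (-3) x - 3 * C * mon 1 2 (-5) x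

def pd12x (B C : ℝ) (x : ℝ × ℝ) : ℝ :=
  3 * B * mon 1 0 (-1) x - B * mon 3 0 (-3) x - 3 * C * mon 1 0 (-3) x + 3 * C * mon 3 0 (-5) x

def pd12y (B C : ℝ) (x : ℝ × ℝ) : ℝ :=
  B * mon 0 1 (-1) x - B * mon 2 1 (-3) x - C * mon 0 1 (-3) x + 3 * C * mon 2 1 (-5) x

def pd21x (B C : ℝ) (x : ℝ × ℝ) : ℝ :=
  -(B * mon 1 0 (-1) x) + B * mon 1 2 (-3) x + C * mon 1 0 (-3) x - 3 * C * mon 1 2 (-5) x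

def pd21y (B C : ℝ) (x : ℝ × ℝ) : ℝ :=
  -(3 * B * mon 0 1 (-1) x) + B * mon 0 3 (-3) x + 3 * C * mon 0 1 (-3) x -
    3 * C * mon 0 3 (-5) x

def pd22x (B C : ℝ) (x : ℝ × ℝ) : ℝ :=
  B * mon 0 1 (-1) x - B * mon 2 1 (-3) x - C * mon 0 1 (-3) x + 3 * C * mon 2 1 (-5) x

def pd22y (B C : ℝ) (x : ℝ × ℝ) : ℝ :=
  B * mon 1 0 (-1) x - B * mon 1 2 (-3) x - C * mon 1 0 (-3) x + 3 * C * mon 1 2 (-5) x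

def lp1 (B C : ℝ) (x : ℝ × ℝ) : ℝ :=
  -(4 * B * mon 0 1 (-1) x) + B * mon 2 1 (-3) x + B * mon 0 3 (-3) x +
    4 * C * mon 0 1 (-3) x - 3 * C * mon 2 1 (-5) x - 3 * C * mon 0 3 (-5) x

def lp2 (B C : ℝ) (x : ℝ × ℝ) : ℝ :=
  4 * B * mon 1 0 (-1) x - B * mon 3 0 (-3) x - B * mon 1 2 (-3) x -
    4 * C * mon 1 0 (-3) x + 3 * C * mon 3 0 (-5) x + 3 * C * mon 1 2 (-5) x

def gg1 (ν A B C : ℝ) (x : ℝ × ℝ) : ℝ :=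
  ν * lp1 B C x + (A ^ 2 + 2 * B * C) * mon 1 0 0 x + B ^ 2 * mon 1 0 2 x +
    C ^ 2 * mon 1 0 (-2) x - 2 * A * B * mon 1 0 1 x - 2 * A * C * mon 1 0 (-1) x

def gg2 (ν A B C : ℝ) (x : ℝ × ℝ) : ℝ :=
  ν * lp2 B C x + (A ^ 2 + 2 * B * C) * mon 0 1 0 x + B ^ 2 * mon 0 1 2 x +
    C ^ 2 * mon 0 1 (-2) x - 2 * A * B * mon 0 1 1 x - 2 * A * C * mon 0 1 (-1) x

def e1x (ν A B C : ℝ) (x : ℝ × ℝ) : ℝ :=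
  ν * (6 * B * mon 1 1 (-3) x - 3 * B * mon 3 1 (-5) x - 3 * B * mon 1 3 (-5) x -
      18 * C * mon 1 1 (-5) x + 15 * C * mon 3 1 (-7) x + 15 * C * mon 1 3 (-7) x) +
    (A ^ 2 + 2 * B * C) * mon 0 0 0 x + B ^ 2 * (mon 0 0 2 x + 2 * mon 2 0 0 x) +
    C ^ 2 * (mon 0 0 (-2) x - 2 * mon 2 0 (-4) x) -
    2 * A * B * (mon 0 0 1 x + mon 2 0 (-1) x) -
    2 * A * C * (mon 0 0 (-1) x - mon 2 0 (-3) x)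

def e1y (ν A B C : ℝ) (x : ℝ × ℝ) : ℝ :=
  ν * (-(4 * B * mon 0 0 (-1) x) + 7 * B * mon 0 2 (-3) x + B * mon 2 0 (-3) x -
      3 * B * mon 2 2 (-5) x - 3 * B * mon 0 4 (-5) x + 4 * C * mon 0 0 (-3) x -
      21 * C * mon 0 2 (-5) x - 3 * C * mon 2 0 (-5) x + 15 * C * mon 2 2 (-7) x +
      15 * C * mon 0 4 (-7) x) +
    2 * B ^ 2 * mon 1 1 0 x - 2 * C ^ 2 * mon 1 1 (-4) x - 2 * A * B * mon 1 1 (-1) x +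
    2 * A * C * mon 1 1 (-3) x

def e2x (ν A B C : ℝ) (x : ℝ × ℝ) : ℝ :=
  ν * (4 * B * mon 0 0 (-1) x - 7 * B * mon 2 0 (-3) x - B * mon 0 2 (-3) x +
      3 * B * mon 4 0 (-5) x + 3 * B * mon 2 2 (-5) x - 4 * C * mon 0 0 (-3) x +
      21 * C * mon 2 0 (-5) x + 3 * C * mon 0 2 (-5) x - 15 * C * mon 4 0 (-7) x -
      15 * C * mon 2 2 (-7) x) +
    2 * B ^ 2 * mon 1 1 0 x - 2 * C ^ 2 * mon 1 1 (-4) x - 2 * A * B * mon 1 1 (-1) x +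
    2 * A * C * mon 1 1 (-3) x

def e2y (ν A B C : ℝ) (x : ℝ × ℝ) : ℝ :=
  ν * (-(6 * B * mon 1 1 (-3) x) + 3 * B * mon 3 1 (-5) x + 3 * B * mon 1 3 (-5) x +
      18 * C * mon 1 1 (-5) x - 15 * C * mon 3 1 (-7) x - 15 * C * mon 1 3 (-7) x) +
    (A ^ 2 + 2 * B * C) * mon 0 0 0 x + B ^ 2 * (mon 0 0 2 x + 2 * mon 0 2 0 x) +
    C ^ 2 * (mon 0 0 (-2) x - 2 * mon 0 2 (-4) x) -
    2 * A * B * (mon 0 0 1 x + mon 0 2 (-1) x) -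
    2 * A * C * (mon 0 0 (-1) x - mon 0 2 (-3) x)

/-! ### Derivative lemmas for the components -/

lemma hvel1 (A B C : ℝ) {x : ℝ × ℝ} (hx : 0 < nrm x) :
    HasFDerivAt (vel1 A B C) (dC (d11 B C x) (d21 A B C x)) x := by
  have h :=
    (((hasFDerivAt_mon 0 1 0 hx).const_mul A).sub
        ((hasFDerivAt_mon 0 1 1 hx).const_mul B)).sub
      ((hasFDerivAt_mon 0 1 (-1) hx).const_mul C)
  refine fd_congr h fun v => ?_
  simp only [ContinuousLinearMap.sub_apply, ContinuousLinearMap.smul_apply, dC_apply,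
    smul_eq_mul, d11, d21]
  norm_num
  ring


lemma hvel2 (A B C : ℝ) {x : ℝ × ℝ} (hx : 0 < nrm x) :
    HasFDerivAt (vel2 A B C) (dC (d12 A B C x) (d22 B C x)) x := by
  have h :=
    ((((hasFDerivAt_mon 1 0 0 hx).const_mul A).neg).add
        ((hasFDerivAt_mon 1 0 1 hx).const_mul B)).add
      ((hasFDerivAt_mon 1 0 (-1) hx).const_mul C)
  refine fd_congr h fun v => ?_
  simp only [ContinuousLinearMap.add_apply, ContinuousLinearMap.sub_apply,
    ContinuousLinearMap.neg_apply, ContinuousLinearMap.smul_apply, dC_apply,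
    smul_eq_mul, d12, d22]
  norm_num
  ring

lemma hd11 (B C : ℝ) {x : ℝ × ℝ} (hx : 0 < nrm x) :
    HasFDerivAt (d11 B C) (dC (pd11x B C x) (pd11y B C x)) x := by
  have h :=
    (((hasFDerivAt_mon 1 1 (-1) hx).const_mul B).neg).add
      ((hasFDerivAt_mon 1 1 (-3) hx).const_mul C)
  refine fd_congr h fun v => ?_
  simp only [ContinuousLinearMap.add_apply, ContinuousLinearMap.sub_apply,
    ContinuousLinearMap.neg_apply, ContinuousLinearMap.smul_apply, dC_apply,
    smul_eq_mul, pd11x, pd11y]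
  norm_num
  ring

lemma hd12 (A B C : ℝ) {x : ℝ × ℝ} (hx : 0 < nrm x) :
    HasFDerivAt (d12 A B C) (dC (pd12x B C x) (pd12y B C x)) x := by
  have h :=
    (((((hasFDerivAt_mon 0 0 0 hx).const_mul A).neg).add
            ((hasFDerivAt_mon 0 0 1 hx).const_mul B)).add
          ((hasFDerivAt_mon 2 0 (-1) hx).const_mul B)).add
        ((hasFDerivAt_mon 0 0 (-1) hx).const_mul C) |>.sub
      ((hasFDerivAt_mon 2 0 (-3) hx).const_mul C)
  refine fd_congr h fun v => ?_
  simp only [ContinuousLinearMap.add_apply, ContinuousLinearMap.sub_apply,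
    ContinuousLinearMap.neg_apply, ContinuousLinearMap.smul_apply, dC_apply,
    smul_eq_mul, pd12x, pd12y]
  norm_num
  ring

lemma hd21 (A B C : ℝ) {x : ℝ × ℝ} (hx : 0 < nrm x) :
    HasFDerivAt (d21 A B C) (dC (pd21x B C x) (pd21y B C x)) x := by
  have h :=
    ((((hasFDerivAt_mon 0 0 0 hx).const_mul A).sub
            ((hasFDerivAt_mon 0 0 1 hx).const_mul B)).sub
          ((hasFDerivAt_mon 0 2 (-1) hx).const_mul B)).sub
        ((hasFDerivAt_mon 0 0 (-1) hx).const_mul C) |>.add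
      ((hasFDerivAt_mon 0 2 (-3) hx).const_mul C)
  refine fd_congr h fun v => ?_
  simp only [ContinuousLinearMap.add_apply, ContinuousLinearMap.sub_apply,
    ContinuousLinearMap.neg_apply, ContinuousLinearMap.smul_apply, dC_apply,
    smul_eq_mul, pd21x, pd21y]
  norm_num
  ring

lemma hd22 (B C : ℝ) {x : ℝ × ℝ} (hx : 0 < nrm x) :
    HasFDerivAt (d22 B C) (dC (pd22x B C x) (pd22y B C x)) x := by
  have h :=
    ((hasFDerivAt_mon 1 1 (-1) hx).const_mul B).sub
      ((hasFDerivAt_mon 1 1 (-3) hx).const_mul C)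
  refine fd_congr h fun v => ?_
  simp only [ContinuousLinearMap.add_apply, ContinuousLinearMap.sub_apply,
    ContinuousLinearMap.neg_apply, ContinuousLinearMap.smul_apply, dC_apply,
    smul_eq_mul, pd22x, pd22y]
  norm_num
  ring

lemma hgg1 (ν A B C : ℝ) {x : ℝ × ℝ} (hx : 0 < nrm x) :
    HasFDerivAt (gg1 ν A B C) (dC (e1x ν A B C x) (e1y ν A B C x)) x := by
  have hlp :=
    (((((hasFDerivAt_mon 0 1 (-1) hx).const_mul (4 * B)).neg).add
              ((hasFDerivAt_mon 2 1 (-3) hx).const_mul B)).add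
            ((hasFDerivAt_mon 0 3 (-3) hx).const_mul B)).add
          ((hasFDerivAt_mon 0 1 (-3) hx).const_mul (4 * C)) |>.sub
        ((hasFDerivAt_mon 2 1 (-5) hx).const_mul (3 * C)) |>.sub
      ((hasFDerivAt_mon 0 3 (-5) hx).const_mul (3 * C))
  have h :=
    ((((hlp.const_mul ν).add
              ((hasFDerivAt_mon 1 0 0 hx).const_mul (A ^ 2 + 2 * B * C))).add
            ((hasFDerivAt_mon 1 0 2 hx).const_mul (B ^ 2))).add
          ((hasFDerivAt_mon 1 0 (-2) hx).const_mul (C ^ 2))).sub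
        ((hasFDerivAt_mon 1 0 1 hx).const_mul (2 * A * B)) |>.sub
      ((hasFDerivAt_mon 1 0 (-1) hx).const_mul (2 * A * C))
  refine fd_congr h fun v => ?_
  simp only [ContinuousLinearMap.add_apply, ContinuousLinearMap.sub_apply,
    ContinuousLinearMap.neg_apply, ContinuousLinearMap.smul_apply, dC_apply,
    smul_eq_mul, e1x, e1y]
  norm_num
  ring

lemma hgg2 (ν A B C : ℝ) {x : ℝ × ℝ} (hx : 0 < nrm x) :
    HasFDerivAt (gg2 ν A B C) (dC (e2x ν A B C x) (e2y ν A B C x)) x := by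
  have hlp :=
    ((((hasFDerivAt_mon 1 0 (-1) hx).const_mul (4 * B)).sub
              ((hasFDerivAt_mon 3 0 (-3) hx).const_mul B)).sub
            ((hasFDerivAt_mon 1 2 (-3) hx).const_mul B)).sub
          ((hasFDerivAt_mon 1 0 (-3) hx).const_mul (4 * C)) |>.add
        ((hasFDerivAt_mon 3 0 (-5) hx).const_mul (3 * C)) |>.add
      ((hasFDerivAt_mon 1 2 (-5) hx).const_mul (3 * C))
  have h :=
    ((((hlp.const_mul ν).add
              ((hasFDerivAt_mon 0 1 0 hx).const_mul (A ^ 2 + 2 * B * C))).add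
            ((hasFDerivAt_mon 0 1 2 hx).const_mul (B ^ 2))).add
          ((hasFDerivAt_mon 0 1 (-2) hx).const_mul (C ^ 2))).sub
        ((hasFDerivAt_mon 0 1 1 hx).const_mul (2 * A * B)) |>.sub
      ((hasFDerivAt_mon 0 1 (-1) hx).const_mul (2 * A * C))
  refine fd_congr h fun v => ?_
  simp only [ContinuousLinearMap.add_apply, ContinuousLinearMap.sub_apply,
    ContinuousLinearMap.neg_apply, ContinuousLinearMap.smul_apply, dC_apply,
    smul_eq_mul, e2x, e2y]
  norm_num
  ring


/-! ### zpow literal helpers -/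

lemma zp0 (t : ℝ) : t ^ (0 : ℤ) = 1 := zpow_zero t
lemma zp1 (t : ℝ) : t ^ (1 : ℤ) = t := zpow_one t
lemma zp2 (t : ℝ) : t ^ (2 : ℤ) = t ^ (2 : ℕ) := zpow_natCast t 2
lemma zpm1 (t : ℝ) : t ^ (-1 : ℤ) = t⁻¹ := by
  rw [zpow_neg]; exact congrArg _ (zpow_one t)
lemma zpm2 (t : ℝ) : t ^ (-2 : ℤ) = (t ^ (2 : ℕ))⁻¹ := by
  rw [zpow_neg]; exact congrArg _ (zpow_natCast t 2)
lemma zpm3 (t : ℝ) : t ^ (-3 : ℤ) = (t ^ (3 : ℕ))⁻¹ := by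
  rw [zpow_neg]; exact congrArg _ (zpow_natCast t 3)
lemma zpm4 (t : ℝ) : t ^ (-4 : ℤ) = (t ^ (4 : ℕ))⁻¹ := by
  rw [zpow_neg]; exact congrArg _ (zpow_natCast t 4)
lemma zpm5 (t : ℝ) : t ^ (-5 : ℤ) = (t ^ (5 : ℕ))⁻¹ := by
  rw [zpow_neg]; exact congrArg _ (zpow_natCast t 5)
lemma zpm7 (t : ℝ) : t ^ (-7 : ℤ) = (t ^ (7 : ℕ))⁻¹ := by
  rw [zpow_neg]; exact congrArg _ (zpow_natCast t 7)

/-! ### Pointwise identities -/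

lemma isOpen_O : IsOpen {y : ℝ × ℝ | 0 < nrm y} := by
  have hc : Continuous nrm := by
    have : Continuous fun y : ℝ × ℝ => Real.sqrt (y.1 ^ 2 + y.2 ^ 2) :=
      ((continuous_fst.pow 2).add (continuous_snd.pow 2)).sqrt
    exact this
  exact isOpen_lt continuous_const hc

lemma vel_eq (δ α₁ α₂ : ℝ) {x : ℝ × ℝ} (hx : 0 < nrm x) :
    vel δ α₁ α₂ x =
      (vel1 (α₁ + α₂ * δ) (α₂ / 2) (δ * α₁ + α₂ * δ ^ 2 / 2) x,
       vel2 (α₁ + α₂ * δ) (α₂ / 2) (δ * α₁ + α₂ * δ ^ 2 / 2) x) := by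
  have ht : nrm x ≠ 0 := hx.ne'
  simp only [vel, prof, vel1, vel2, mon, zp0, zp1, zpm1, Prod.smul_mk, smul_eq_mul,
    Prod.mk.injEq]
  constructor <;> (field_simp; ring)

lemma fderiv_vel_eq (δ α₁ α₂ : ℝ) {x : ℝ × ℝ} (hx : 0 < nrm x) :
    fderiv ℝ (vel δ α₁ α₂) x =
      (dC (d11 (α₂ / 2) (δ * α₁ + α₂ * δ ^ 2 / 2) x)
          (d21 (α₁ + α₂ * δ) (α₂ / 2) (δ * α₁ + α₂ * δ ^ 2 / 2) x)).prod
        (dC (d12 (α₁ + α₂ * δ) (α₂ / 2) (δ * α₁ + α₂ * δ ^ 2 / 2) x)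
          (d22 (α₂ / 2) (δ * α₁ + α₂ * δ ^ 2 / 2) x)) := by
  have hP := ((hvel1 (α₁ + α₂ * δ) (α₂ / 2) (δ * α₁ + α₂ * δ ^ 2 / 2) hx).prodMk
    (hvel2 (α₁ + α₂ * δ) (α₂ / 2) (δ * α₁ + α₂ * δ ^ 2 / 2) hx))
  have hEv : vel δ α₁ α₂ =ᶠ[nhds x]
      fun y => (vel1 (α₁ + α₂ * δ) (α₂ / 2) (δ * α₁ + α₂ * δ ^ 2 / 2) y,
        vel2 (α₁ + α₂ * δ) (α₂ / 2) (δ * α₁ + α₂ * δ ^ 2 / 2) y) := by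
    filter_upwards [isOpen_O.mem_nhds hx] with y hy
    exact vel_eq δ α₁ α₂ hy
  exact (hP.congr_of_eventuallyEq hEv).fderiv

lemma lap_vel_eq (δ α₁ α₂ : ℝ) {x : ℝ × ℝ} (hx : 0 < nrm x) :
    lap (vel δ α₁ α₂) x =
      (pd11x (α₂ / 2) (δ * α₁ + α₂ * δ ^ 2 / 2) x +
        pd21y (α₂ / 2) (δ * α₁ + α₂ * δ ^ 2 / 2) x,
       pd12x (α₂ / 2) (δ * α₁ + α₂ * δ ^ 2 / 2) x +
        pd22y (α₂ / 2) (δ * α₁ + α₂ * δ ^ 2 / 2) x) := by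
  set A := α₁ + α₂ * δ
  set B := α₂ / 2
  set C := δ * α₁ + α₂ * δ ^ 2 / 2
  have h10 : (fun y => fderiv ℝ (vel δ α₁ α₂) y (1, 0)) =ᶠ[nhds x]
      fun y => (d11 B C y, d12 A B C y) := by
    filter_upwards [isOpen_O.mem_nhds hx] with y hy
    rw [fderiv_vel_eq δ α₁ α₂ hy]
    simp [ContinuousLinearMap.prod_apply, dC_apply]
    exact ⟨rfl, rfl⟩
  have h01 : (fun y => fderiv ℝ (vel δ α₁ α₂) y (0, 1)) =ᶠ[nhds x]
      fun y => (d21 A B C y, d22 B C y) := by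
    filter_upwards [isOpen_O.mem_nhds hx] with y hy
    rw [fderiv_vel_eq δ α₁ α₂ hy]
    simp [ContinuousLinearMap.prod_apply, dC_apply]
    exact ⟨rfl, rfl⟩
  have hP10 := ((hd11 B C hx).prodMk (hd12 A B C hx)).fderiv
  have hP01 := ((hd21 A B C hx).prodMk (hd22 B C hx)).fderiv
  rw [lap, h10.fderiv_eq, h01.fderiv_eq, hP10, hP01]
  simp [ContinuousLinearMap.prod_apply, dC_apply, Prod.ext_iff]

set_option maxHeartbeats 2000000 in
lemma NS_eq (ν δ α₁ α₂ : ℝ) {x : ℝ × ℝ} (hx : 0 < nrm x) :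
    (-ν) • lap (vel δ α₁ α₂) x + fderiv ℝ (vel δ α₁ α₂) x (vel δ α₁ α₂ x) =
      -(gg1 ν (α₁ + α₂ * δ) (α₂ / 2) (δ * α₁ + α₂ * δ ^ 2 / 2) x,
        gg2 ν (α₁ + α₂ * δ) (α₂ / 2) (δ * α₁ + α₂ * δ ^ 2 / 2) x) := by
  have ht : nrm x ≠ 0 := hx.ne'
  set A := α₁ + α₂ * δ with hA
  set B := α₂ / 2 with hB
  set C := δ * α₁ + α₂ * δ ^ 2 / 2 with hC
  rw [lap_vel_eq δ α₁ α₂ hx, fderiv_vel_eq δ α₁ α₂ hx, vel_eq δ α₁ α₂ hx]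
  simp only [ContinuousLinearMap.prod_apply, dC_apply, Prod.mk_add_mk, Prod.smul_mk,
    Prod.neg_mk, Prod.mk.injEq, smul_eq_mul]
  constructor
  · simp only [gg1, lp1, pd11x, pd21y, d11, d21, vel1, vel2, mon,
      zp0, zp1, zp2, zpm1, zpm2, zpm3, zpm5]
    field_simp
    ring
  · simp only [gg2, lp2, pd12x, pd22y, d12, d22, vel1, vel2, mon,
      zp0, zp1, zp2, zpm1, zpm2, zpm3, zpm5]
    field_simp
    ring

set_option maxHeartbeats 2000000 in
lemma curl_key (ν A B C : ℝ) {x : ℝ × ℝ} (hx : 0 < nrm x) :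
    e2x ν A B C x - e1y ν A B C x =
      ν * (3 * B * (nrm x)⁻¹ + C * ((nrm x) ^ (3 : ℕ))⁻¹) := by
  have ht : nrm x ≠ 0 := hx.ne'
  have h2 : x.1 ^ 2 + x.2 ^ 2 = nrm x ^ 2 := nrm_sq hx
  have hu : nrm x * (nrm x)⁻¹ = 1 := mul_inv_cancel₀ ht
  simp only [e2x, e1y, mon, zp0, zp1, zp2, zpm1, zpm2, zpm3, zpm4, zpm5, zpm7]
  linear_combination
    (-5*(nrm x)⁻¹^3*B*ν + 9*(nrm x)⁻¹^5*C*ν + 3*x.2^2*(nrm x)⁻¹^5*B*ν -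
      15*x.2^2*(nrm x)⁻¹^7*C*ν + 3*x.1^2*(nrm x)⁻¹^5*B*ν - 15*x.1^2*(nrm x)⁻¹^7*C*ν) * h2 +
    (-5*(nrm x)⁻¹*B*ν + 9*(nrm x)⁻¹^3*C*ν - 5*(nrm x)*(nrm x)⁻¹^2*B*ν +
      9*(nrm x)*(nrm x)⁻¹^4*C*ν + 3*x.2^2*(nrm x)⁻¹^3*B*ν - 15*x.2^2*(nrm x)⁻¹^5*C*ν +
      3*x.2^2*(nrm x)*(nrm x)⁻¹^4*B*ν - 15*x.2^2*(nrm x)*(nrm x)⁻¹^6*C*ν +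
      3*x.1^2*(nrm x)⁻¹^3*B*ν - 15*x.1^2*(nrm x)⁻¹^5*C*ν +
      3*x.1^2*(nrm x)*(nrm x)⁻¹^4*B*ν - 15*x.1^2*(nrm x)*(nrm x)⁻¹^6*C*ν) * hu

end NSAux

open NSAux in
/-- The parallel laminar flow with Poiseuille-type profile cannot be a stationary
Navier–Stokes flow near a boundary portion of constant nonzero curvature `1/δ`. -/
theorem no_stationary_parallel_laminar_flow
    (ν δ α₁ α₂ : ℝ) (hν : 0 < ν) (hδ : 0 < δ) (hα₁ : 0 < α₁) (hα₂ : 0 < α₂) :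
    ∃ r₀ : ℝ, 0 < r₀ ∧
      ∀ U : Set (ℝ × ℝ), IsOpen U → IsConnected U →
        U ⊆ {x : ℝ × ℝ | δ < nrm x ∧ nrm x < δ + r₀} →
        ¬ ∃ p : ℝ × ℝ → ℝ, ContDiffOn ℝ 1 p U ∧
            ∀ x ∈ U,
              (-ν) • lap (vel δ α₁ α₂) x
                  + fderiv ℝ (vel δ α₁ α₂) x (vel δ α₁ α₂ x)
                = -grad p x := by
  refine ⟨1, one_pos, ?_⟩
  intro U hUopen hUconn hUsub
  rintro ⟨p, hp, heq⟩
  obtain ⟨x₀, hx₀U⟩ := hUconn.nonempty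
  have hposU : ∀ y ∈ U, 0 < nrm y := fun y hy => lt_trans hδ (hUsub hy).1
  have hx0 : 0 < nrm x₀ := hposU x₀ hx₀U
  have hgradU : ∀ y ∈ U,
      fderiv ℝ p y (1, 0) = gg1 ν (α₁ + α₂ * δ) (α₂ / 2) (δ * α₁ + α₂ * δ ^ 2 / 2) y ∧
      fderiv ℝ p y (0, 1) = gg2 ν (α₁ + α₂ * δ) (α₂ / 2) (δ * α₁ + α₂ * δ ^ 2 / 2) y := by
    intro y hy
    have h := heq y hy
    rw [NS_eq ν δ α₁ α₂ (hposU y hy)] at h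
    have h2 := neg_injective h
    rw [grad, Prod.ext_iff] at h2
    exact ⟨h2.1.symm, h2.2.symm⟩
  have hfd : ∀ y ∈ U, HasFDerivAt p
      (dC (gg1 ν (α₁ + α₂ * δ) (α₂ / 2) (δ * α₁ + α₂ * δ ^ 2 / 2) y)
          (gg2 ν (α₁ + α₂ * δ) (α₂ / 2) (δ * α₁ + α₂ * δ ^ 2 / 2) y)) y := by
    intro y hy
    have hdiff : DifferentiableAt ℝ p y :=
      (hp.differentiableOn one_ne_zero).differentiableAt (hUopen.mem_nhds hy)
    have h := hdiff.hasFDerivAt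
    have hEq : fderiv ℝ p y =
        dC (gg1 ν (α₁ + α₂ * δ) (α₂ / 2) (δ * α₁ + α₂ * δ ^ 2 / 2) y)
           (gg2 ν (α₁ + α₂ * δ) (α₂ / 2) (δ * α₁ + α₂ * δ ^ 2 / 2) y) := by
      rw [clm_eq_dC (fderiv ℝ p y), (hgradU y hy).1, (hgradU y hy).2]
    rwa [hEq] at h
  have hev : ∀ᶠ y in nhds x₀, HasFDerivAt p
      (dC (gg1 ν (α₁ + α₂ * δ) (α₂ / 2) (δ * α₁ + α₂ * δ ^ 2 / 2) y)
          (gg2 ν (α₁ + α₂ * δ) (α₂ / 2) (δ * α₁ + α₂ * δ ^ 2 / 2) y)) y := by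
    filter_upwards [hUopen.mem_nhds hx₀U] with y hy using hfd y hy
  have hf'' : HasFDerivAt
      (fun y => dC (gg1 ν (α₁ + α₂ * δ) (α₂ / 2) (δ * α₁ + α₂ * δ ^ 2 / 2) y)
          (gg2 ν (α₁ + α₂ * δ) (α₂ / 2) (δ * α₁ + α₂ * δ ^ 2 / 2) y))
      (ContinuousLinearMap.smulRight
          (dC (e1x ν (α₁ + α₂ * δ) (α₂ / 2) (δ * α₁ + α₂ * δ ^ 2 / 2) x₀)
           (e1y ν (α₁ + α₂ * δ) (α₂ / 2) (δ * α₁ + α₂ * δ ^ 2 / 2) x₀)) fstL +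
        ContinuousLinearMap.smulRight
          (dC (e2x ν (α₁ + α₂ * δ) (α₂ / 2) (δ * α₁ + α₂ * δ ^ 2 / 2) x₀)
           (e2y ν (α₁ + α₂ * δ) (α₂ / 2) (δ * α₁ + α₂ * δ ^ 2 / 2) x₀)) sndL) x₀ := by
    have h1 := (hgg1 ν (α₁ + α₂ * δ) (α₂ / 2) (δ * α₁ + α₂ * δ ^ 2 / 2) hx0).smul_const fstL
    have h2 := (hgg2 ν (α₁ + α₂ * δ) (α₂ / 2) (δ * α₁ + α₂ * δ ^ 2 / 2) hx0).smul_const sndL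
    exact h1.add h2
  have hsym := second_derivative_symmetric_of_eventually hev hf''
    ((1 : ℝ), (0 : ℝ)) ((0 : ℝ), (1 : ℝ))
  simp only [ContinuousLinearMap.add_apply, ContinuousLinearMap.smulRight_apply,
    ContinuousLinearMap.smul_apply, dC_apply, smul_eq_mul, fstL, sndL,
    ContinuousLinearMap.coe_fst', ContinuousLinearMap.coe_snd',
    mul_one, mul_zero, add_zero, zero_add, one_mul, zero_mul] at hsym
  have hkey := curl_key ν (α₁ + α₂ * δ) (α₂ / 2) (δ * α₁ + α₂ * δ ^ 2 / 2) hx0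
  have hBpos : (0 : ℝ) < α₂ / 2 := half_pos hα₂
  have hCpos : (0 : ℝ) < δ * α₁ + α₂ * δ ^ 2 / 2 := by
    have h1 := mul_pos hδ hα₁
    have h2 := mul_pos hα₂ (pow_pos hδ 2)
    linarith
  have hval : 0 < ν * (3 * (α₂ / 2) * (nrm x₀)⁻¹ +
      (δ * α₁ + α₂ * δ ^ 2 / 2) * ((nrm x₀) ^ (3 : ℕ))⁻¹) := by
    have h1 : 0 < (nrm x₀)⁻¹ := inv_pos.mpr hx0
    have h2 : 0 < ((nrm x₀) ^ (3 : ℕ))⁻¹ := inv_pos.mpr (pow_pos hx0 3)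
    have h3 := mul_pos (by linarith : (0 : ℝ) < 3 * (α₂ / 2)) h1
    have h4 := mul_pos hCpos h2
    exact mul_pos hν (by linarith)
  rw [hsym] at hkey
  linarith
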